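/- Let A ⊆ X be a convex subgraph of a directed graph X such that there are no edges from X∖A into A. Then the map p: MC(X) → MC(A) defined on generators by p(x₀,...,x_k) = (x₀,...,x_k) if x_k ∈ A and 0 otherwise, is a chain map splitting the inclusion MC(A) → MC(X). -/

import Mathlib

open scoped Classical

/-- A directed graph on a vertex type `V` (loops allowed, no parallel edges). -/
structure DGraph (V : Type) where
  Adj : V → V → Prop

namespace DGraph
variable {V : Type}

/-- There is a directed path of length `n` (i.e. with `n` edges) from `x` to `y`. -/
def PathLen (G : DGraph V) (x y : V) (n : ℕ) : Prop :=
  ∃ f : ℕ → V, f 0 = x ∧ f n = y ∧ ∀ i < n, G.Adj (f i) (f (i + 1))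

/-- The shortest path metric, with values in `ℕ∞ = ℕ ∪ {∞}`. -/
noncomputable def edist (G : DGraph V) (x y : V) : ℕ∞ :=
  sInf {n : ℕ∞ | ∃ m : ℕ, n = m ∧ G.PathLen x y m}

/-- The length of a tuple of vertices: the sum of consecutive distances. -/
noncomputable def tlen (G : DGraph V) {k : ℕ} (f : Fin (k + 1) → V) : ℕ∞ :=
  ∑ i : Fin k, G.edist (f i.castSucc) (f i.succ)

/-- `y` is reachable from `x` by a directed path. -/
def Reaches (G : DGraph V) (x y : V) : Prop := Relation.ReflTransGen G.Adj x y

/-- The induced subgraph on a set of vertices. -/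
def induce (G : DGraph V) (A : Set V) : DGraph A := ⟨fun a b => G.Adj a.1 b.1⟩

end DGraph

variable {V : Type}

/-- Validity of a tuple as a magnitude-chain basis element of degree `k` and length `ℓ`:
consecutive entries are distinct, at finite distance, and the total length is `ℓ`. -/
def MCValid (G : DGraph V) (k ℓ : ℕ) (f : Fin (k + 1) → V) : Prop :=
  (∀ i : Fin k, G.edist (f i.castSucc) (f i.succ) ≠ 0 ∧ G.edist (f i.castSucc) (f i.succ) ≠ ⊤) ∧
    G.tlen f = (ℓ : ℕ∞)

/-- Basis of the magnitude chain group `MC_{k,ℓ}(G)`. -/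
def MCb (G : DGraph V) (k ℓ : ℕ) : Type := {f : Fin (k + 1) → V // MCValid G k ℓ f}

/-- The magnitude chain group `MC_{k,ℓ}(G)` with coefficients in `R`. -/
abbrev MCMod (R : Type) [CommRing R] (G : DGraph V) (k ℓ : ℕ) := MCb G k ℓ →₀ R

/-- Deletion of the interior entry in position `j+1` of a `(k+2)`-tuple. -/
def delMid {k : ℕ} (f : Fin (k + 2) → V) (j : Fin k) : Fin (k + 1) → V :=
  f ∘ (Fin.succAbove j.succ.castSucc)

/-- The magnitude-chain differential `MC_{k+1,ℓ}(G) → MC_{k,ℓ}(G)`: delete interior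
entries with alternating signs, omitting any length-decreasing term. -/
noncomputable def dMC (R : Type) [CommRing R] (G : DGraph V) (k ℓ : ℕ) :
    MCMod R G (k + 1) ℓ →ₗ[R] MCMod R G k ℓ :=
  Finsupp.lsum R fun b => LinearMap.toSpanSingleton R _
    (∑ j : Fin k, (-1 : R) ^ ((j : ℕ) + 1) •
      (if h : MCValid G k ℓ (delMid b.1 j) then
        Finsupp.single (⟨delMid b.1 j, h⟩ : MCb G k ℓ) (1 : R) else 0))

/-- The outgoing magnitude differential from degree `k` (zero in degree `0`). -/
noncomputable def dMCOut (R : Type) [CommRing R] (G : DGraph V) (ℓ : ℕ) :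
    (k : ℕ) → MCMod R G k ℓ →ₗ[R] MCMod R G (k - 1) ℓ
  | 0 => 0
  | (k + 1) => dMC R G k ℓ

/-- Magnitude homology `MH_{k,ℓ}(G)` with coefficients in `R`. -/
noncomputable abbrev MH (R : Type) [CommRing R] (G : DGraph V) (k ℓ : ℕ) :=
  letI : HasQuotient (LinearMap.ker (dMCOut R G ℓ k))
      (Submodule R (LinearMap.ker (dMCOut R G ℓ k))) :=
        @Submodule.hasQuotient R (LinearMap.ker (dMCOut R G ℓ k)) _ _ _
  LinearMap.ker (dMCOut R G ℓ k) ⧸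
    (LinearMap.range (dMCOut R G ℓ (k + 1))).comap (LinearMap.ker (dMCOut R G ℓ k)).subtype

/-- Embedding of the magnitude chains into the free module on all tuples of vertices. -/
noncomputable def eMC (R : Type) [CommRing R] (G : DGraph V) (k ℓ : ℕ) :
    MCMod R G k ℓ →ₗ[R] ((Fin (k + 1) → V) →₀ R) :=
  Finsupp.lmapDomain R R Subtype.val

/-- Basis of a subcomplex of the magnitude chains, cut out by a predicate `P` on tuples
(assumed closed under the interior deletions appearing in the differential). -/
def RCb (G : DGraph V) (P : ∀ k, (Fin (k + 1) → V) → Prop) (k ℓ : ℕ) : Type :=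
  {f : Fin (k + 1) → V // MCValid G k ℓ f ∧ P k f}

/-- The degree-`k`, length-`ℓ` chain group of the subcomplex cut out by `P`. -/
abbrev RMod (R : Type) [CommRing R] (G : DGraph V) (P : ∀ k, (Fin (k + 1) → V) → Prop)
    (k ℓ : ℕ) := RCb G P k ℓ →₀ R

/-- The differential of the subcomplex cut out by `P`. -/
noncomputable def dR (R : Type) [CommRing R] (G : DGraph V)
    (P : ∀ k, (Fin (k + 1) → V) → Prop) (k ℓ : ℕ) :
    RMod R G P (k + 1) ℓ →ₗ[R] RMod R G P k ℓ :=
  Finsupp.lsum R fun b => LinearMap.toSpanSingleton R _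
    (∑ j : Fin k, (-1 : R) ^ ((j : ℕ) + 1) •
      (if h : MCValid G k ℓ (delMid b.1 j) ∧ P k (delMid b.1 j) then
        Finsupp.single (⟨delMid b.1 j, h⟩ : RCb G P k ℓ) (1 : R) else 0))

/-- The outgoing differential of the subcomplex from degree `k` (zero in degree `0`). -/
noncomputable def dROut (R : Type) [CommRing R] (G : DGraph V)
    (P : ∀ k, (Fin (k + 1) → V) → Prop) (ℓ : ℕ) :
    (k : ℕ) → RMod R G P k ℓ →ₗ[R] RMod R G P (k - 1) ℓ
  | 0 => 0
  | (k + 1) => dR R G P k ℓ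

/-- The degree-`k`, length-`ℓ` homology of the subcomplex cut out by `P`. -/
noncomputable abbrev RH (R : Type) [CommRing R] (G : DGraph V)
    (P : ∀ k, (Fin (k + 1) → V) → Prop) (k ℓ : ℕ) :=
  letI : HasQuotient (LinearMap.ker (dROut R G P ℓ k))
      (Submodule R (LinearMap.ker (dROut R G P ℓ k))) :=
        @Submodule.hasQuotient R (LinearMap.ker (dROut R G P ℓ k)) _ _ _
  LinearMap.ker (dROut R G P ℓ k) ⧸
    (LinearMap.range (dROut R G P ℓ (k + 1))).comap (LinearMap.ker (dROut R G P ℓ k)).subtype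

/-- Embedding of the subcomplex chains into the free module on all tuples of vertices. -/
noncomputable def eR (R : Type) [CommRing R] (G : DGraph V)
    (P : ∀ k, (Fin (k + 1) → V) → Prop) (k ℓ : ℕ) :
    RMod R G P k ℓ →ₗ[R] ((Fin (k + 1) → V) →₀ R) :=
  Finsupp.lmapDomain R R Subtype.val

/-- `A ⊆ V`, with projection `π`, is a cofibration in `G`: an induced subgraph inclusion
with no edges from outside `A` into `A`, such that every vertex `x` in the reach of `A`
has a projection `π x ∈ A` with `d(a,x) = d(a,π x) + d(π x,x)` for all `a ∈ A`. -/
def IsCofib (G : DGraph V) (A : Set V) (π : V → V) : Prop :=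
  (∀ u v : V, u ∉ A → v ∈ A → ¬ G.Adj u v) ∧
  (∀ x : V, (∃ a ∈ A, G.Reaches a x) →
    π x ∈ A ∧ ∀ a ∈ A, G.edist a x = G.edist a (π x) + G.edist (π x) x)

/-- The predicate cutting out the subcomplex `A_{*,ℓ}(a,x)` of `MC_{*,ℓ}(X)`: tuples
starting at `a`, ending at `x`, with all intermediate entries in `A`. -/
def AP (A : Set V) (a x : V) : ∀ k, (Fin (k + 1) → V) → Prop :=
  fun k f => f 0 = a ∧ f (Fin.last k) = x ∧
    ∀ i : Fin (k + 1), i ≠ 0 → i ≠ Fin.last k → f i ∈ A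

section ConvexHelpers

lemma path_mem_aux (G : DGraph V) (A : Set V)
    (hne : ∀ u v : V, u ∉ A → v ∈ A → ¬ G.Adj u v) :
    ∀ (m : ℕ) (f : ℕ → V), f m ∈ A → (∀ i < m, G.Adj (f i) (f (i + 1))) → f 0 ∈ A := by
  intro m
  induction m with
  | zero => exact fun f h _ => h
  | succ n ih =>
    intro f h hadj
    refine ih f ?_ fun i hi => hadj i (hi.trans (Nat.lt_succ_self n))
    by_contra hn
    exact hne _ _ hn h (hadj n (Nat.lt_succ_self n))

lemma mem_of_edist_ne_top (G : DGraph V) (A : Set V)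
    (hne : ∀ u v : V, u ∉ A → v ∈ A → ¬ G.Adj u v) {x y : V}
    (h : G.edist x y ≠ ⊤) (hy : y ∈ A) : x ∈ A := by
  have hS : {n : ℕ∞ | ∃ m : ℕ, n = m ∧ G.PathLen x y m}.Nonempty := by
    by_contra hn
    rw [Set.not_nonempty_iff_eq_empty] at hn
    rw [DGraph.edist, hn, sInf_empty] at h
    exact h rfl
  obtain ⟨n, m, rfl, f, h0, hm, hadj⟩ := hS
  have := path_mem_aux G A hne m f (hm ▸ hy) hadj
  rwa [h0] at this

lemma all_mem (G : DGraph V) (A : Set V)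
    (hne : ∀ u v : V, u ∉ A → v ∈ A → ¬ G.Adj u v) {k ℓ : ℕ} {f : Fin (k + 1) → V}
    (hv : MCValid G k ℓ f) (hl : f (Fin.last k) ∈ A) : ∀ i, f i ∈ A := by
  intro i
  induction i using Fin.reverseInduction with
  | last => exact hl
  | cast i ih => exact mem_of_edist_ne_top G A hne (hv.1 i).2 ih

lemma valid_transfer (G : DGraph V) (A : Set V)
    (hconv : ∀ a b : A, (G.induce A).edist a b = G.edist a.1 b.1) {k ℓ : ℕ}
    (g : Fin (k + 1) → A) :
    MCValid (G.induce A) k ℓ g ↔ MCValid G k ℓ (fun i => (g i : V)) := by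
  unfold MCValid DGraph.tlen
  simp only [hconv]

lemma delMid_last {k : ℕ} (f : Fin (k + 2) → V) (j : Fin k) :
    delMid f j (Fin.last k) = f (Fin.last (k + 1)) := by
  have h : (j.succ.castSucc : Fin (k + 2)).succAbove (Fin.last k) = Fin.last (k + 1) := by
    rw [Fin.succAbove_of_le_castSucc, Fin.succ_last]
    simp only [Fin.le_def, Fin.coe_castSucc, Fin.val_succ, Fin.val_last]
    omega
  simp [delMid, Function.comp, h]

lemma delMid_coe (A : Set V) {k : ℕ} (g : Fin (k + 2) → A) (j : Fin k) :
    delMid (fun i => ((g i : V))) j = fun i => ((delMid (V := A) g j i : V)) := rfl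

lemma all_mem_delMid (A : Set V) {k : ℕ} {f : Fin (k + 2) → V} (h : ∀ i, f i ∈ A)
    (j : Fin k) : ∀ i, delMid f j i ∈ A := fun i => h _

/-- The basis map defining `p`. -/
noncomputable def pAux (R : Type) [CommRing R] (G : DGraph V) (A : Set V) (k ℓ : ℕ)
    (b : MCb G k ℓ) : MCMod R (G.induce A) k ℓ :=
  if h : ∀ i, b.1 i ∈ A then
    if hv : MCValid (G.induce A) k ℓ (fun i => ⟨b.1 i, h i⟩) then
      Finsupp.single ⟨fun i => ⟨b.1 i, h i⟩, hv⟩ 1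
    else 0
  else 0

/-- The linear map `p`. -/
noncomputable def pMap (R : Type) [CommRing R] (G : DGraph V) (A : Set V) (k ℓ : ℕ) :
    MCMod R G k ℓ →ₗ[R] MCMod R (G.induce A) k ℓ :=
  Finsupp.lsum R fun b => LinearMap.toSpanSingleton R _ (pAux R G A k ℓ b)

lemma pMap_single (R : Type) [CommRing R] (G : DGraph V) (A : Set V) (k ℓ : ℕ)
    (b : MCb G k ℓ) (r : R) :
    pMap R G A k ℓ (Finsupp.single b r) = r • pAux R G A k ℓ b := by
  simp [pMap]

lemma pAux_of_mem (R : Type) [CommRing R] (G : DGraph V) (A : Set V)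
    (hconv : ∀ a b : A, (G.induce A).edist a b = G.edist a.1 b.1) (k ℓ : ℕ)
    (b : MCb G k ℓ) (h : ∀ i, b.1 i ∈ A) :
    pAux R G A k ℓ b =
      Finsupp.single ⟨fun i => ⟨b.1 i, h i⟩,
        (valid_transfer G A hconv _).mpr b.2⟩ 1 := by
  rw [pAux, dif_pos h, dif_pos]

lemma pAux_of_not_mem (R : Type) [CommRing R] (G : DGraph V) (A : Set V) (k ℓ : ℕ)
    (b : MCb G k ℓ) (h : b.1 (Fin.last k) ∉ A) : pAux R G A k ℓ b = 0 := by
  rw [pAux, dif_neg]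
  exact fun hall => h (hall _)

lemma dMC_single (R : Type) [CommRing R] (G : DGraph V) (k ℓ : ℕ)
    (b : MCb G (k + 1) ℓ) (r : R) :
    dMC R G k ℓ (Finsupp.single b r) =
      r • ∑ j : Fin k, (-1 : R) ^ ((j : ℕ) + 1) •
        (if h : MCValid G k ℓ (delMid b.1 j) then
          Finsupp.single (⟨delMid b.1 j, h⟩ : MCb G k ℓ) (1 : R) else 0) := by
  simp only [dMC, Finsupp.lsum_single, LinearMap.toSpanSingleton_apply]
  rfl

lemma key_chain (R : Type) [CommRing R] (G : DGraph V) (A : Set V)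
    (hconv : ∀ a b : A, (G.induce A).edist a b = G.edist a.1 b.1)
    (hnoentry : ∀ u v : V, u ∉ A → v ∈ A → ¬ G.Adj u v) (k ℓ : ℕ)
    (b : MCb G (k + 1) ℓ) :
    dMC R (G.induce A) k ℓ (pAux R G A (k + 1) ℓ b) =
      pMap R G A k ℓ (dMC R G k ℓ (Finsupp.single b 1)) := by
  rw [dMC_single, one_smul]
  erw [map_sum (pMap R G A k ℓ)]
  by_cases hall : ∀ i, b.1 i ∈ A
  · erw [pAux_of_mem R G A hconv _ _ b hall, dMC_single, one_smul]
    refine Finset.sum_congr rfl fun j _ => ?_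
    erw [map_smul (pMap R G A k ℓ)]
    congr 1
    have hiff := valid_transfer G A hconv
      (g := delMid (V := ↑A) (fun i => (⟨b.1 i, hall i⟩ : A)) j) (ℓ := ℓ)
    by_cases hc : MCValid G k ℓ (delMid b.1 j)
    · erw [dif_pos (hiff.mpr hc), dif_pos hc, pMap_single, one_smul,
        pAux_of_mem R G A hconv k ℓ ⟨delMid b.1 j, hc⟩
          (fun i => hall (j.succ.castSucc.succAbove i))]
      rfl
    · erw [dif_neg (fun h => hc (hiff.mp h)), dif_neg hc, map_zero]
      rfl
  · have hlast : b.1 (Fin.last (k + 1)) ∉ A :=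
      fun h => hall (all_mem G A hnoentry b.2 h)
    rw [pAux_of_not_mem R G A _ _ b hlast, map_zero]
    symm
    refine Finset.sum_eq_zero fun j _ => ?_
    erw [map_smul (pMap R G A k ℓ)]
    by_cases hc : MCValid G k ℓ (delMid b.1 j)
    · erw [dif_pos hc, pMap_single, one_smul,
        pAux_of_not_mem R G A k ℓ ⟨delMid b.1 j, hc⟩
          (by rw [show (⟨delMid b.1 j, hc⟩ : MCb G k ℓ).1 (Fin.last k) =
                delMid b.1 j (Fin.last k) from rfl, delMid_last]; exact hlast),
        smul_zero]
    · erw [dif_neg hc, map_zero, smul_zero]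

end ConvexHelpers

/-- if `A ⊆ X` is convex and there are no edges from `X∖A` into `A`, the
map `p : MC(X) → MC(A)`, sending a generator to itself if its last entry lies in `A`
and to `0` otherwise, is a chain map splitting the inclusion `MC(A) → MC(X)`. -/
theorem convex_splitting (R : Type) [CommRing R] (G : DGraph V) (A : Set V)
    (hconv : ∀ a b : A, (G.induce A).edist a b = G.edist a.1 b.1)
    (hnoentry : ∀ u v : V, u ∉ A → v ∈ A → ¬ G.Adj u v) :
    ∃ p : ∀ k ℓ, MCMod R G k ℓ →ₗ[R] MCMod R (G.induce A) k ℓ,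
      -- `p` is given on basis elements by the stated formula:
      (∀ k ℓ (b : MCb G k ℓ),
        Finsupp.lmapDomain R R (fun b' : MCb (G.induce A) k ℓ => fun i => (b'.1 i : V))
            (p k ℓ (Finsupp.single b 1)) =
          if b.1 (Fin.last k) ∈ A then Finsupp.single b.1 1 else 0) ∧
      -- `p` is a chain map:
      (∀ k ℓ (c : MCMod R G (k + 1) ℓ),
        dMC R (G.induce A) k ℓ (p (k + 1) ℓ c) = p k ℓ (dMC R G k ℓ c)) ∧
      -- `p` splits the inclusion `ι : MC(A) → MC(X)`:
      (∀ ι : ∀ k ℓ, MCMod R (G.induce A) k ℓ →ₗ[R] MCMod R G k ℓ,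
        (∀ k ℓ (b : MCb (G.induce A) k ℓ),
          eMC R G k ℓ (ι k ℓ (Finsupp.single b 1)) =
            Finsupp.single (fun i => (b.1 i : V)) 1) →
        ∀ k ℓ (c : MCMod R (G.induce A) k ℓ), p k ℓ (ι k ℓ c) = c) := by
  classical
  refine ⟨fun k ℓ => pMap R G A k ℓ, ?_, ?_, ?_⟩
  · intro k ℓ b
    rw [pMap_single, one_smul]
    by_cases h : b.1 (Fin.last k) ∈ A
    · have hall := all_mem G A hnoentry b.2 h
      erw [pAux_of_mem R G A hconv k ℓ b hall, if_pos h, Finsupp.lmapDomain_apply,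
        Finsupp.mapDomain_single]
    · rw [pAux_of_not_mem R G A k ℓ b h, if_neg h, map_zero]
  · intro k ℓ c
    induction c using Finsupp.induction_linear with
    | zero => simp
    | add f g hf hg => simp [map_add, hf, hg]
    | single b r =>
      have h1 : Finsupp.single b r = r • Finsupp.single b (1 : R) := by
        rw [Finsupp.smul_single', mul_one]
      rw [h1, map_smul, map_smul, pMap_single, one_smul, map_smul,
        key_chain R G A hconv hnoentry k ℓ b, map_smul]
  · intro ι hι k ℓ c
    induction c using Finsupp.induction_linear with
    | zero => simp
    | add f g hf hg => simp [map_add, hf, hg]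
    | single b r =>
      have hb : ι k ℓ (Finsupp.single b 1) =
          Finsupp.single ⟨fun i => (b.1 i : V),
            (valid_transfer G A hconv b.1).mp b.2⟩ 1 := by
        have hinj : Function.Injective
            (Finsupp.mapDomain (α := MCb G k ℓ) (M := R) Subtype.val) :=
          Finsupp.mapDomain_injective Subtype.val_injective
        apply hinj
        have := hι k ℓ b
        erw [eMC, Finsupp.lmapDomain_apply] at this
        erw [this, Finsupp.mapDomain_single]
      have h1 : Finsupp.single b r = r • Finsupp.single b (1 : R) := by
        rw [Finsupp.smul_single', mul_one]
      erw [h1, map_smul, map_smul, hb, pMap_single, one_smul,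
        pAux_of_mem R G A hconv k ℓ _ (fun i => (b.1 i).2)]
      rfl
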